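/- arXiv:2002.04778 — 6 statements merged into one kernel-verified Lean document; each statement's English description precedes it below -/
import Mathlib

section
/- Let H be a finite simple graph, k a positive integer, and c : V(H) → [k] a coloring such that no two vertices of the same color are adjacent. Let (𝒮, U) be the SET-COVER instance constructed from (H, k, c) as described, and let k' = k + C(k,2). If H contains a multicolored clique of size k (a clique with exactly one vertex of each color), with vertices v_1,…,v_k where v_i has color i, then the collection {S_{v_1},…,S_{v_k}} ∪ {S_{v_i v_j} : 1 ≤ i < j ≤ k} is a set cover of 𝒮 of cardinality k'. -/
/-- The element type of the SET-COVER universe constructed from a multicolored-clique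
instance: an element is a color `i ∈ [k]`, an unordered pair of colors `{i,j}`,
or an ordered pair of vertices `(u,v)`. -/
abbrev MCElt (k : ℕ) (V : Type*) := Fin k ⊕ (Sym2 (Fin k) ⊕ V × V)

/-- The universe `U = [k] ∪ {{i,j} : i ≠ j} ∪ {(u,v) : uv ∈ E(H)}` of the constructed
SET-COVER instance (both ordered pairs are included for each edge of `H`). -/
def mcUniv {V : Type*} (H : SimpleGraph V) (k : ℕ) : Set (MCElt k V) :=
  {w | (∃ i : Fin k, w = Sum.inl i) ∨
       (∃ s : Sym2 (Fin k), ¬ s.IsDiag ∧ w = Sum.inr (Sum.inl s)) ∨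
       (∃ u v : V, H.Adj u v ∧ w = Sum.inr (Sum.inr (u, v)))}

/-- The set `S_u = {c(u)} ∪ {(u,v) : v ∈ N(u)}` constructed from a vertex `u`. -/
def mcVtxSet {V : Type*} (H : SimpleGraph V) {k : ℕ} (c : V → Fin k) (u : V) :
    Set (MCElt k V) :=
  {w | w = Sum.inl (c u) ∨ ∃ v, H.Adj u v ∧ w = Sum.inr (Sum.inr (u, v))}

/-- The set `S_{uv} = {{c(u),c(v)}} ∪ {(x,y) ∈ U_{c(u)c(v)} : x ∉ {u,v}}` constructed
from an edge `uv` of `H` (where `U_{ij}` is the set of ordered pairs of adjacent vertices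
with color pair `{i,j}`). -/
def mcEdgeSet {V : Type*} (H : SimpleGraph V) {k : ℕ} (c : V → Fin k) (u v : V) :
    Set (MCElt k V) :=
  {w | w = Sum.inr (Sum.inl s(c u, c v)) ∨
       ∃ x y, H.Adj x y ∧ s(c x, c y) = s(c u, c v) ∧ x ≠ u ∧ x ≠ v ∧
         w = Sum.inr (Sum.inr (x, y))}

/-- The collection `𝒮` of the constructed SET-COVER instance: one set `S_u` for each
vertex `u` of `H` and one set `S_{uv}` for each edge `uv` of `H`. -/
def mcColl {V : Type*} (H : SimpleGraph V) {k : ℕ} (c : V → Fin k) :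
    Set (Set (MCElt k V)) :=
  {T | ∃ u, T = mcVtxSet H c u} ∪ {T | ∃ u v, H.Adj u v ∧ T = mcEdgeSet H c u v}

private lemma mc_card_lt_pairs (k : ℕ) :
    ({p : Fin k × Fin k | p.1 < p.2}).ncard = k.choose 2 := by
  have e : {p : Fin k × Fin k // p.1 < p.2} ≃ {s : Sym2 (Fin k) // ¬ s.IsDiag} := by
    refine Equiv.ofBijective (fun p => ⟨s(p.1.1, p.1.2), by
      rw [Sym2.mk_isDiag_iff]; exact p.2.ne⟩) ⟨?_, ?_⟩
    · rintro ⟨⟨a, b⟩, hab⟩ ⟨⟨a', b'⟩, hab'⟩ h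
      have h2 : s((a:Fin k), b) = s(a', b') := congrArg Subtype.val h
      rw [Sym2.eq_iff] at h2
      rcases h2 with ⟨rfl, rfl⟩ | ⟨rfl, rfl⟩
      · rfl
      · exact absurd hab' (asymm hab)
    · rintro ⟨s, hs⟩
      revert hs
      refine Sym2.inductionOn s ?_
      intro a b hs
      have hab : a ≠ b := by rwa [Sym2.mk_isDiag_iff] at hs
      rcases hab.lt_or_gt with h | h
      · exact ⟨⟨(a, b), h⟩, rfl⟩
      · exact ⟨⟨(b, a), h⟩, Subtype.ext (Sym2.eq_swap)⟩
  have : ({p : Fin k × Fin k | p.1 < p.2}).ncard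
      = Nat.card {p : Fin k × Fin k // p.1 < p.2} := rfl
  rw [this, Nat.card_congr e, Nat.card_eq_fintype_card, Sym2.card_subtype_not_diag,
    Fintype.card_fin]

/-- forward direction in the proof of Lemma 6 of the paper: let `H` be
a finite simple graph, `k > 0`, and `c` a proper coloring of `H` with colors `Fin k`.
If `H` has a multicolored clique `v₁, …, v_k` (with `c(vᵢ) = i`), then the collection
`{S_{v₁}, …, S_{v_k}} ∪ {S_{vᵢvⱼ} : i < j}` is a set cover of the constructed instance
of cardinality exactly `k' = k + C(k,2)`. -/
theorem multicolored_clique_to_cover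
    {V : Type*} [Fintype V] [DecidableEq V]
    (H : SimpleGraph V) (k : ℕ) (hk : 0 < k)
    (c : V → Fin k)
    (hproper : ∀ u w : V, H.Adj u w → c u ≠ c w)
    (v : Fin k → V)
    (hcol : ∀ i, c (v i) = i)
    (hclique : ∀ i j, i ≠ j → H.Adj (v i) (v j)) :
    ({T | ∃ i, T = mcVtxSet H c (v i)} ∪
        {T | ∃ i j : Fin k, i < j ∧ T = mcEdgeSet H c (v i) (v j)}) ⊆ mcColl H c ∧
    mcUniv H k ⊆
      ⋃₀ ({T | ∃ i, T = mcVtxSet H c (v i)} ∪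
        {T | ∃ i j : Fin k, i < j ∧ T = mcEdgeSet H c (v i) (v j)}) ∧
    ({T | ∃ i, T = mcVtxSet H c (v i)} ∪
        {T | ∃ i j : Fin k, i < j ∧ T = mcEdgeSet H c (v i) (v j)}).ncard
      = k + k.choose 2 := by
  set A : Set (Set (MCElt k V)) := {T | ∃ i, T = mcVtxSet H c (v i)} with hAdef
  set B : Set (Set (MCElt k V)) :=
    {T | ∃ i j : Fin k, i < j ∧ T = mcEdgeSet H c (v i) (v j)} with hBdef
  refine ⟨?_, ?_, ?_⟩
  · rintro T (⟨i, rfl⟩ | ⟨i, j, hij, rfl⟩)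
    · exact Or.inl ⟨v i, rfl⟩
    · exact Or.inr ⟨v i, v j, hclique i j hij.ne, rfl⟩
  · rintro w (⟨i, rfl⟩ | ⟨s, hs, rfl⟩ | ⟨u, u', huv, rfl⟩)
    · exact ⟨mcVtxSet H c (v i), Or.inl ⟨i, rfl⟩, Or.inl (by rw [hcol])⟩
    · revert hs
      refine Sym2.inductionOn s ?_
      intro a b hs
      have hab : a ≠ b := by rwa [Sym2.mk_isDiag_iff] at hs
      rcases hab.lt_or_gt with h | h
      · exact ⟨mcEdgeSet H c (v a) (v b), Or.inr ⟨a, b, h, rfl⟩,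
          Or.inl (by rw [hcol, hcol])⟩
      · exact ⟨mcEdgeSet H c (v b) (v a), Or.inr ⟨b, a, h, rfl⟩,
          Or.inl (by rw [hcol, hcol, Sym2.eq_swap])⟩
    · by_cases hu : u = v (c u)
      · refine ⟨mcVtxSet H c (v (c u)), Or.inl ⟨c u, rfl⟩, Or.inr ⟨u', ?_, ?_⟩⟩
        · rw [← hu]; exact huv
        · rw [← hu]
      · have hij : c u ≠ c u' := hproper u u' huv
        have hne2 : u ≠ v (c u') := fun h => hij (by rw [h, hcol])
        rcases hij.lt_or_gt with h | h
        · exact ⟨mcEdgeSet H c (v (c u)) (v (c u')), Or.inr ⟨c u, c u', h, rfl⟩,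
            Or.inr ⟨u, u', huv, by rw [hcol, hcol], hu, hne2, rfl⟩⟩
        · exact ⟨mcEdgeSet H c (v (c u')) (v (c u)), Or.inr ⟨c u', c u, h, rfl⟩,
            Or.inr ⟨u, u', huv, by rw [hcol, hcol, Sym2.eq_swap], hne2, hu, rfl⟩⟩
  · -- cardinality
    have hvinj : ∀ i j : Fin k, mcVtxSet H c (v i) = mcVtxSet H c (v j) → i = j := by
      intro i j h
      have hmem : (Sum.inl i : MCElt k V) ∈ mcVtxSet H c (v i) := Or.inl (by rw [hcol])
      rw [h] at hmem
      rcases hmem with h' | ⟨y, _, h'⟩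
      · rw [← hcol j]; exact Sum.inl.inj h'
      · exact absurd h' (by simp)
    have heinj : ∀ i j i' j' : Fin k, i < j → i' < j' →
        mcEdgeSet H c (v i) (v j) = mcEdgeSet H c (v i') (v j') → (i, j) = (i', j') := by
      intro i j i' j' hij hij' h
      have hmem : (Sum.inr (Sum.inl s(i, j)) : MCElt k V) ∈ mcEdgeSet H c (v i) (v j) :=
        Or.inl (by rw [hcol, hcol])
      rw [h] at hmem
      rcases hmem with h' | ⟨x, y, _, _, _, _, h'⟩
      · rw [hcol, hcol] at h'
        have := Sum.inl.inj (Sum.inr.inj h')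
        rw [Sym2.eq_iff] at this
        rcases this with ⟨rfl, rfl⟩ | ⟨rfl, rfl⟩
        · rfl
        · exact absurd hij' (asymm hij)
      · exact absurd h' (by simp)
    have hAeq : A = Set.range (fun i => mcVtxSet H c (v i)) := by
      ext T; constructor
      · rintro ⟨i, rfl⟩; exact ⟨i, rfl⟩
      · rintro ⟨i, rfl⟩; exact ⟨i, rfl⟩
    have hBeq : B = (fun p : Fin k × Fin k => mcEdgeSet H c (v p.1) (v p.2)) ''
        {p : Fin k × Fin k | p.1 < p.2} := by
      ext T; constructor
      · rintro ⟨i, j, hij, rfl⟩; exact ⟨(i, j), hij, rfl⟩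
      · rintro ⟨⟨i, j⟩, hij, rfl⟩; exact ⟨i, j, hij, rfl⟩
    have hAfin : A.Finite := by rw [hAeq]; exact Set.finite_range _
    have hBfin : B.Finite := by
      rw [hBeq]; exact (Set.toFinite _).image _
    have hdisj : Disjoint A B := by
      rw [Set.disjoint_left]
      rintro T ⟨i, rfl⟩ ⟨i', j', _, hT⟩
      have hmem : (Sum.inl i : MCElt k V) ∈ mcVtxSet H c (v i) := Or.inl (by rw [hcol])
      rw [hT] at hmem
      rcases hmem with h' | ⟨x, y, _, _, _, _, h'⟩ <;> exact absurd h' (by simp)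
    rw [Set.ncard_union_eq hdisj hAfin hBfin]
    have hA : A.ncard = k := by
      rw [hAeq, ← Set.image_univ,
        Set.ncard_image_of_injective _ (fun i j h => hvinj i j h),
        Set.ncard_univ, Nat.card_eq_fintype_card, Fintype.card_fin]
    have hB : B.ncard = k.choose 2 := by
      rw [hBeq, Set.ncard_image_of_injOn, mc_card_lt_pairs]
      rintro ⟨i, j⟩ hij ⟨i', j'⟩ hij' h
      exact heinj i j i' j' hij hij' h
    rw [hA, hB]
end

section
/- Let H be a finite simple graph, k a positive integer, and c : V(H) → [k] a coloring such that no two vertices of the same color are adjacent. Let (𝒮, U) be the SET-COVER instance constructed from (H, k, c) as described, and let k' = k + C(k,2). Then every set cover of 𝒮 of cardinality at most k' is an exact cover (its sets are pairwise disjoint). -/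
/-- exactness part of Lemma 6 of the paper: let `H` be a finite
simple graph, `k > 0`, and `c` a proper coloring of `H` with colors `Fin k`.
Then every set cover of the constructed SET-COVER instance of cardinality at most
`k' = k + C(k,2)` is an exact cover, i.e. its sets are pairwise disjoint. -/
theorem small_cover_is_exact
    {V : Type*} [Fintype V] [DecidableEq V]
    (H : SimpleGraph V) (k : ℕ) (hk : 0 < k)
    (c : V → Fin k)
    (hproper : ∀ u w : V, H.Adj u w → c u ≠ c w)
    (𝒮star : Set (Set (MCElt k V)))
    (hsub : 𝒮star ⊆ mcColl H c)
    (hcover : mcUniv H k ⊆ ⋃₀ 𝒮star)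
    (hcard : 𝒮star.ncard ≤ k + k.choose 2) :
    ∀ A ∈ 𝒮star, ∀ B ∈ 𝒮star, A ≠ B → Disjoint A B := by
  classical
  -- membership characterizations
  have hvinl : ∀ (u : V) (i : Fin k),
      (Sum.inl i : MCElt k V) ∈ mcVtxSet H c u ↔ i = c u := fun u i => by simp [mcVtxSet]
  have hvpr : ∀ (u x y : V),
      (Sum.inr (Sum.inr (x, y)) : MCElt k V) ∈ mcVtxSet H c u ↔ H.Adj u y ∧ x = u :=
    fun u x y => by simp [mcVtxSet]
  have hvns : ∀ (u : V) (s : Sym2 (Fin k)),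
      (Sum.inr (Sum.inl s) : MCElt k V) ∉ mcVtxSet H c u := fun u s => by simp [mcVtxSet]
  have heinl : ∀ (a b : V) (i : Fin k),
      (Sum.inl i : MCElt k V) ∉ mcEdgeSet H c a b := fun a b i => by simp [mcEdgeSet]
  have hes : ∀ (a b : V) (s : Sym2 (Fin k)),
      (Sum.inr (Sum.inl s) : MCElt k V) ∈ mcEdgeSet H c a b ↔ s = s(c a, c b) :=
    fun a b s => by simp [mcEdgeSet]
  have hepr : ∀ (a b x y : V),
      (Sum.inr (Sum.inr (x, y)) : MCElt k V) ∈ mcEdgeSet H c a b ↔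
        H.Adj x y ∧ s(c x, c y) = s(c a, c b) ∧ x ≠ a ∧ x ≠ b := by
    intro a b x y
    constructor
    · rintro (h | ⟨x', y', hadj, hs, hne1, hne2, h⟩)
      · simp at h
      · simp only [Sum.inr.injEq, Prod.mk.injEq] at h
        obtain ⟨rfl, rfl⟩ := h
        exact ⟨hadj, hs, hne1, hne2⟩
    · rintro ⟨hadj, hs, hne1, hne2⟩
      exact Or.inr ⟨x, y, hadj, hs, hne1, hne2, rfl⟩
  have hesymm : ∀ a b : V, mcEdgeSet H c a b = mcEdgeSet H c b a := by
    intro a b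
    have hs : s(c b, c a) = s(c a, c b) := Sym2.eq_swap
    ext w
    simp only [mcEdgeSet, Set.mem_setOf_eq, hs]
    tauto
  -- the vertex part and the edge part of the cover
  set Sv : Set (Set (MCElt k V)) := {T | T ∈ 𝒮star ∧ ∃ u, T = mcVtxSet H c u} with hSvdef
  set Se : Set (Set (MCElt k V)) :=
    {T | T ∈ 𝒮star ∧ ∃ a b, H.Adj a b ∧ T = mcEdgeSet H c a b} with hSedef
  have hunion : 𝒮star = Sv ∪ Se := by
    apply Set.Subset.antisymm
    · intro T hT
      rcases hsub hT with ⟨u, hu⟩ | ⟨a, b, hab, hT'⟩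
      · exact Or.inl ⟨hT, u, hu⟩
      · exact Or.inr ⟨hT, a, b, hab, hT'⟩
    · rintro T (⟨h, -⟩ | ⟨h, -⟩) <;> exact h
  have hdisjSvSe : Disjoint Sv Se := by
    rw [Set.disjoint_left]
    rintro T ⟨hT, u, rfl⟩ ⟨hT', a, b, hab, heq⟩
    have hmem : (Sum.inl (c u) : MCElt k V) ∈ mcVtxSet H c u := (hvinl u (c u)).mpr rfl
    rw [heq] at hmem
    exact heinl a b (c u) hmem
  have hSvfin : Sv.Finite := by
    apply (Set.finite_range (mcVtxSet H c)).subset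
    rintro T ⟨hT, u, rfl⟩; exact ⟨u, rfl⟩
  have hSefin : Se.Finite := by
    apply (Set.finite_range (fun p : V × V => mcEdgeSet H c p.1 p.2)).subset
    rintro T ⟨hT, a, b, hab, rfl⟩; exact ⟨(a, b), rfl⟩
  -- coverage of the colors and the color pairs
  have hcovV : ∀ i : Fin k, ∃ u : V, c u = i ∧ mcVtxSet H c u ∈ 𝒮star := by
    intro i
    have hmem : (Sum.inl i : MCElt k V) ∈ mcUniv H k := Or.inl ⟨i, rfl⟩
    obtain ⟨T, hT, hwT⟩ := hcover hmem
    rcases hsub hT with ⟨u, rfl⟩ | ⟨a, b, hab, rfl⟩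
    · exact ⟨u, ((hvinl u i).mp hwT).symm, hT⟩
    · exact absurd hwT (heinl a b i)
  have hcovE : ∀ s : Sym2 (Fin k), ¬s.IsDiag →
      ∃ a b : V, H.Adj a b ∧ s(c a, c b) = s ∧ mcEdgeSet H c a b ∈ 𝒮star := by
    intro s hs
    have hmem : (Sum.inr (Sum.inl s) : MCElt k V) ∈ mcUniv H k := Or.inr (Or.inl ⟨s, hs, rfl⟩)
    obtain ⟨T, hT, hwT⟩ := hcover hmem
    rcases hsub hT with ⟨u, rfl⟩ | ⟨a, b, hab, rfl⟩
    · exact absurd hwT (hvns u s)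
    · exact ⟨a, b, hab, ((hes a b s).mp hwT).symm, hT⟩
  haveI : Fintype ↥Sv := hSvfin.fintype
  haveI : Fintype ↥Se := hSefin.fintype
  -- the color of a vertex set, the color pair of an edge set
  have colv_ex : ∀ T : ↥Sv, ∃ u : V, (T : Set (MCElt k V)) = mcVtxSet H c u := fun T => T.2.2
  set colv : ↥Sv → Fin k := fun T => c (colv_ex T).choose with hcolv
  have colv_spec : ∀ (T : ↥Sv) (i : Fin k),
      Sum.inl i ∈ (T : Set (MCElt k V)) → colv T = i := by
    intro T i hi
    have h := (colv_ex T).choose_spec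
    rw [h] at hi
    exact ((hvinl _ i).mp hi).symm
  have colv_surj : Function.Surjective colv := by
    intro i
    obtain ⟨u, hcu, hmem⟩ := hcovV i
    exact ⟨⟨mcVtxSet H c u, hmem, u, rfl⟩, colv_spec _ i ((hvinl u i).mpr hcu.symm)⟩
  have cole_ex : ∀ T : ↥Se,
      ∃ p : V × V, H.Adj p.1 p.2 ∧ (T : Set (MCElt k V)) = mcEdgeSet H c p.1 p.2 := by
    rintro ⟨T, hT, a, b, hab, rfl⟩; exact ⟨(a, b), hab, rfl⟩
  set cole : ↥Se → {s : Sym2 (Fin k) // ¬s.IsDiag} := fun T =>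
    ⟨s(c (cole_ex T).choose.1, c (cole_ex T).choose.2), by
      rw [Sym2.mk_isDiag_iff]; exact hproper _ _ (cole_ex T).choose_spec.1⟩ with hcole
  have cole_spec : ∀ (T : ↥Se) (s : Sym2 (Fin k)),
      Sum.inr (Sum.inl s) ∈ (T : Set (MCElt k V)) → (cole T : Sym2 (Fin k)) = s := by
    intro T s hs
    obtain ⟨hadj, heq⟩ := (cole_ex T).choose_spec
    rw [heq] at hs
    exact ((hes _ _ s).mp hs).symm
  have cole_surj : Function.Surjective cole := by
    rintro ⟨s, hs⟩
    obtain ⟨a, b, hab, hsab, hmem⟩ := hcovE s hs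
    exact ⟨⟨mcEdgeSet H c a b, hmem, a, b, hab, rfl⟩,
      Subtype.ext (cole_spec _ s ((hes a b s).mpr hsab.symm))⟩
  -- counting
  have hSvcard : Sv.ncard = Fintype.card ↥Sv := by
    rw [← Nat.card_coe_set_eq, Nat.card_eq_fintype_card]
  have hSecard : Se.ncard = Fintype.card ↥Se := by
    rw [← Nat.card_coe_set_eq, Nat.card_eq_fintype_card]
  have h1 : k ≤ Fintype.card ↥Sv := by
    have := Fintype.card_le_of_surjective colv colv_surj
    simpa using this
  have h2 : k.choose 2 ≤ Fintype.card ↥Se := by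
    have := Fintype.card_le_of_surjective cole cole_surj
    rwa [Sym2.card_subtype_not_diag, Fintype.card_fin] at this
  have htot : Sv.ncard + Se.ncard ≤ k + k.choose 2 := by
    rw [← Set.ncard_union_eq hdisjSvSe hSvfin hSefin, ← hunion]; exact hcard
  have hveq : Fintype.card ↥Sv = k := by omega
  have heeq : Fintype.card ↥Se = k.choose 2 := by omega
  have colv_inj : Function.Injective colv :=
    ((Fintype.bijective_iff_surjective_and_card colv).mpr
      ⟨colv_surj, by rw [hveq, Fintype.card_fin]⟩).1
  have cole_inj : Function.Injective cole :=
    ((Fintype.bijective_iff_surjective_and_card cole).mpr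
      ⟨cole_surj, by rw [heeq, Sym2.card_subtype_not_diag, Fintype.card_fin]⟩).1
  -- uniqueness of the chosen vertex set of each color / edge set of each color pair
  have uniqV : ∀ u1 u2 : V, mcVtxSet H c u1 ∈ 𝒮star → mcVtxSet H c u2 ∈ 𝒮star →
      c u1 = c u2 → mcVtxSet H c u1 = mcVtxSet H c u2 := by
    intro u1 u2 h1' h2' hc
    have e1 : colv ⟨mcVtxSet H c u1, h1', u1, rfl⟩ = c u1 :=
      colv_spec _ _ ((hvinl u1 (c u1)).mpr rfl)
    have e2 : colv ⟨mcVtxSet H c u2, h2', u2, rfl⟩ = c u2 :=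
      colv_spec _ _ ((hvinl u2 (c u2)).mpr rfl)
    have := colv_inj (e1.trans (hc.trans e2.symm))
    exact congrArg Subtype.val this
  have uniqE : ∀ a1 b1 a2 b2 : V, H.Adj a1 b1 → H.Adj a2 b2 →
      mcEdgeSet H c a1 b1 ∈ 𝒮star → mcEdgeSet H c a2 b2 ∈ 𝒮star →
      s(c a1, c b1) = s(c a2, c b2) → mcEdgeSet H c a1 b1 = mcEdgeSet H c a2 b2 := by
    intro a1 b1 a2 b2 hab1 hab2 h1' h2' hc
    have e1 : (cole ⟨mcEdgeSet H c a1 b1, h1', a1, b1, hab1, rfl⟩ : Sym2 (Fin k)) =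
        s(c a1, c b1) := cole_spec _ _ ((hes a1 b1 _).mpr rfl)
    have e2 : (cole ⟨mcEdgeSet H c a2 b2, h2', a2, b2, hab2, rfl⟩ : Sym2 (Fin k)) =
        s(c a2, c b2) := cole_spec _ _ ((hes a2 b2 _).mpr rfl)
    have := cole_inj (Subtype.ext (e1.trans (hc.trans e2.symm)))
    exact congrArg Subtype.val this
  -- the endpoints of chosen edge sets are chosen vertices
  have hL3 : ∀ a b : V, H.Adj a b → mcEdgeSet H c a b ∈ 𝒮star → mcVtxSet H c a ∈ 𝒮star := by
    intro a b hab hmem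
    have hw : (Sum.inr (Sum.inr (a, b)) : MCElt k V) ∈ mcUniv H k :=
      Or.inr (Or.inr ⟨a, b, hab, rfl⟩)
    obtain ⟨T, hT, hwT⟩ := hcover hw
    rcases hsub hT with ⟨u, rfl⟩ | ⟨x, y, hxy, rfl⟩
    · obtain ⟨-, rfl⟩ := (hvpr u a b).mp hwT
      exact hT
    · obtain ⟨-, hseq, -, -⟩ := (hepr x y a b).mp hwT
      have heq := uniqE a b x y hab hxy hmem hT hseq
      rw [← heq] at hwT
      exact absurd rfl ((hepr a b a b).mp hwT).2.2.1
  -- a chosen vertex set and a chosen edge set are disjoint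
  have keyVE : ∀ (u a b : V) (w : MCElt k V), H.Adj a b → mcVtxSet H c u ∈ 𝒮star →
      mcEdgeSet H c a b ∈ 𝒮star → w ∈ mcVtxSet H c u → w ∈ mcEdgeSet H c a b → False := by
    intro u a b w hab hu hab' hwA hwB
    rcases w with i | s | ⟨x, y⟩
    · exact heinl a b i hwB
    · exact hvns u s hwA
    · obtain ⟨hadj, rfl⟩ := (hvpr u x y).mp hwA
      obtain ⟨-, hseq, hne1, hne2⟩ := (hepr a b x y).mp hwB
      have hkey : ∀ v : V, c x = c v → x ≠ v → mcVtxSet H c v ∈ 𝒮star → False := by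
        intro v hcv hne hv
        have heq := uniqV x v hu hv hcv
        have hm : (Sum.inr (Sum.inr (x, y)) : MCElt k V) ∈ mcVtxSet H c x :=
          (hvpr x x y).mpr ⟨hadj, rfl⟩
        rw [heq] at hm
        exact hne ((hvpr v x y).mp hm).2
      rcases Sym2.eq_iff.mp hseq with ⟨h', -⟩ | ⟨h', -⟩
      · exact hkey a h' hne1 (hL3 a b hab hab')
      · exact hkey b h' hne2 (hL3 b a hab.symm (by rw [hesymm b a]; exact hab'))
  -- conclusion
  rintro A hA B hB hne
  rw [Set.disjoint_left]
  intro w hwA hwB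
  rcases hsub hA with ⟨u, rfl⟩ | ⟨a, b, hab, rfl⟩ <;>
    rcases hsub hB with ⟨u', rfl⟩ | ⟨a', b', hab', rfl⟩
  · have hcne : c u ≠ c u' := fun h => hne (uniqV u u' hA hB h)
    rcases w with i | s | ⟨x, y⟩
    · exact hcne (((hvinl u i).mp hwA).symm.trans ((hvinl u' i).mp hwB))
    · exact hvns u s hwA
    · exact hcne (congrArg c (((hvpr u x y).mp hwA).2.symm.trans ((hvpr u' x y).mp hwB).2))
  · exact keyVE u a' b' w hab' hA hB hwA hwB
  · exact keyVE u' a b w hab hB hA hwB hwA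
  · have hcne : s(c a, c b) ≠ s(c a', c b') := fun h => hne (uniqE a b a' b' hab hab' hA hB h)
    rcases w with i | s | ⟨x, y⟩
    · exact heinl a b i hwA
    · exact hcne (((hes a b s).mp hwA).symm.trans ((hes a' b' s).mp hwB))
    · exact hcne ((((hepr a b x y).mp hwA).2.1).symm.trans (((hepr a' b' x y).mp hwB).2.1))
end

section
/- Let c_1, c_2 : Σ → ℕ be two CNPs over a finite alphabet Σ and let n* = Σ_{x ∈ Σ} min(c_1(x), c_2(x)). Then for all strings S_1, S_2 over Σ with cnp(S_1) = c_1 and cnp(S_2) = c_2, the number of common adjacencies satisfies a(S_1, S_2) ≤ n*. -/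
/-- The copy-number profile of a string: the number of occurrences of each character. -/
def cnp {α : Type*} [DecidableEq α] (S : List α) : α → ℕ := fun x => S.count x

/-- The adjacency multiset of a string: the multiset of unordered pairs
`{S[i], S[i+1]}` over all consecutive positions of `S`. -/
def adjMultiset {α : Type*} : List α → Multiset (Sym2 α)
  | [] => 0
  | [_] => 0
  | a :: b :: rest => s(a, b) ::ₘ adjMultiset (b :: rest)

/-- The number of common adjacencies `a(S₁, S₂)` between two strings: the cardinality of
the multiset intersection of their adjacency multisets. -/
def numAdj {α : Type*} [DecidableEq α] (S₁ S₂ : List α) : ℕ :=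
  Multiset.card (adjMultiset S₁ ∩ adjMultiset S₂)

/-- endpoints of an unordered pair, as a multiset of size 2 -/
def toM {α : Type*} : Sym2 α → Multiset α :=
  Sym2.lift ⟨fun a b => {a, b}, fun a b => Multiset.pair_comm a b⟩

@[simp] lemma toM_mk {α : Type*} (a b : α) : toM s(a, b) = {a, b} := rfl

lemma card_toM {α : Type*} (z : Sym2 α) : Multiset.card (toM z) = 2 := by
  induction z using Sym2.ind with
  | _ a b => simp [toM]

lemma card_bind_toM {α : Type*} (M : Multiset (Sym2 α)) :
    Multiset.card (M.bind toM) = 2 * Multiset.card M := by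
  induction M using Multiset.induction with
  | empty => simp
  | cons a s ih => simp [Multiset.cons_bind, card_toM, ih]; ring

lemma count_bind_toM_le {α : Type*} [DecidableEq α] (x : α) :
    ∀ (a : α) (rest : List α),
      Multiset.count x ((adjMultiset (a :: rest)).bind toM) + (if x = a then 1 else 0)
        ≤ 2 * (a :: rest).count x := by
  intro a rest
  induction rest generalizing a with
  | nil =>
    simp [adjMultiset, List.count_cons]
    split <;> simp_all
  | cons b rest ih =>
    have h := ih b
    show Multiset.count x ((adjMultiset (a :: b :: rest)).bind toM) + _ ≤ _
    rw [adjMultiset, Multiset.cons_bind]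
    rw [Multiset.count_add]
    have hc : Multiset.count x (toM s(a, b)) =
        (if x = a then 1 else 0) + (if x = b then 1 else 0) := by
      simp [Multiset.count_cons, Multiset.count_singleton]
      split <;> split <;> omega
    have hl : (a :: b :: rest).count x =
        (if x = a then 1 else 0) + (b :: rest).count x := by
      rcases eq_or_ne x a with rfl | hxa
      · simp [List.count_cons]; omega
      · simp [List.count_cons, hxa, Ne.symm hxa]
    rw [hc, hl]
    omega

lemma count_bind_toM_le' {α : Type*} [DecidableEq α] (x : α) (S : List α) :
    Multiset.count x ((adjMultiset S).bind toM) ≤ 2 * S.count x := by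
  cases S with
  | nil => simp [adjMultiset]
  | cons a rest =>
    have := count_bind_toM_le x a rest
    omega

lemma sum_count_eq_card {α : Type*} [Fintype α] [DecidableEq α] (M : Multiset α) :
    ∑ x : α, Multiset.count x M = Multiset.card M := by
  induction M using Multiset.induction with
  | empty => simp
  | cons a s ih =>
    simp only [Multiset.count_cons, Multiset.card_cons, Finset.sum_add_distrib, ih]
    simp

lemma bind_le_bind {α β : Type*} [DecidableEq β] {s t : Multiset α} (f : α → Multiset β)
    (h : s ≤ t) : s.bind f ≤ t.bind f := by
  obtain ⟨u, rfl⟩ := Multiset.le_iff_exists_add.mp h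
  rw [Multiset.add_bind]
  exact le_add_right le_rfl

/-- upper bound in Theorem 4 of the paper: for CNPs `c₁, c₂` over a
finite alphabet `α` and `n* = Σ_x min(c₁(x), c₂(x))`, every pair of strings `S₁, S₂` with
`cnp(S₁) = c₁` and `cnp(S₂) = c₂` has at most `n*` common adjacencies. -/
theorem numAdj_le_nstar
    {α : Type*} [Fintype α] [DecidableEq α] (c₁ c₂ : α → ℕ) :
    ∀ S₁ S₂ : List α, cnp S₁ = c₁ → cnp S₂ = c₂ →
      numAdj S₁ S₂ ≤ ∑ x : α, min (c₁ x) (c₂ x) := by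
  intro S₁ S₂ h₁ h₂
  subst h₁ h₂
  set m := adjMultiset S₁ ∩ adjMultiset S₂ with hm
  have key : ∀ x : α, Multiset.count x (m.bind toM) ≤
      min (2 * S₁.count x) (2 * S₂.count x) := by
    intro x
    refine le_min ?_ ?_
    · exact le_trans (Multiset.count_le_of_le x
        (bind_le_bind toM Multiset.inter_le_left)) (count_bind_toM_le' x S₁)
    · exact le_trans (Multiset.count_le_of_le x
        (bind_le_bind toM Multiset.inter_le_right)) (count_bind_toM_le' x S₂)
  have h2 : 2 * Multiset.card m ≤ 2 * ∑ x : α, min (cnp S₁ x) (cnp S₂ x) := by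
    rw [← card_bind_toM, ← sum_count_eq_card (m.bind toM), Finset.mul_sum]
    refine Finset.sum_le_sum fun x _ => ?_
    have := key x
    simp only [cnp]
    omega
  have : numAdj S₁ S₂ = Multiset.card m := rfl
  omega
end

section
/- Let c_1, c_2 : Σ → ℕ be two CNPs over a finite alphabet Σ and let n* = Σ_{x ∈ Σ} min(c_1(x), c_2(x)). If n* ≥ 1, then there exist strings S_1, S_2 over Σ with cnp(S_1) = c_1, cnp(S_2) = c_2, and a(S_1, S_2) ≥ n* − 1. -/
lemma sum_map_toList {α : Type*} {β : Type*} [AddCommMonoid β] (s : Finset α) (g : α → β) :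
    (s.toList.map g).sum = ∑ x ∈ s, g x := by
  rw [Finset.sum, ← Multiset.coe_toList s.val, Multiset.map_coe, Multiset.sum_coe]
  rfl

/-- A list realizing a given CNP. -/
noncomputable def listOf {α : Type*} [Fintype α] [DecidableEq α] (f : α → ℕ) : List α :=
  Finset.univ.toList.flatMap (fun y => List.replicate (f y) y)

lemma count_listOf {α : Type*} [Fintype α] [DecidableEq α] (f : α → ℕ) (x : α) :
    (listOf f).count x = f x := by
  unfold listOf
  rw [List.count_flatMap]
  have h : ∀ y ∈ Finset.univ.toList, (List.replicate (f y) y).count x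
      = if y = x then f x else 0 := by
    intro y _
    rcases eq_or_ne y x with rfl | hy
    · simp
    · simp [List.count_replicate, hy, Ne.symm hy]
  simp only [Function.comp_def]
  rw [List.map_congr_left h, sum_map_toList]
  simp

lemma length_listOf {α : Type*} [Fintype α] [DecidableEq α] (f : α → ℕ) :
    (listOf f).length = ∑ x : α, f x := by
  unfold listOf
  rw [List.length_flatMap]
  simp only [Function.comp_def, List.length_replicate]
  exact sum_map_toList _ f

lemma adjMultiset_prefix_le {α : Type*} (L R : List α) :
    adjMultiset L ≤ adjMultiset (L ++ R) := by
  induction L with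
  | nil => simp [adjMultiset]
  | cons a t ih =>
    cases t with
    | nil => simp [adjMultiset]
    | cons b rest =>
      show s(a,b) ::ₘ adjMultiset (b :: rest) ≤ adjMultiset (a :: b :: rest ++ R)
      have : adjMultiset (a :: b :: rest ++ R) = s(a,b) ::ₘ adjMultiset ((b :: rest) ++ R) := rfl
      rw [this]
      exact Multiset.cons_le_cons _ ih

lemma card_adjMultiset {α : Type*} (L : List α) :
    Multiset.card (adjMultiset L) = L.length - 1 := by
  induction L with
  | nil => simp [adjMultiset]
  | cons a t ih =>
    cases t with
    | nil => simp [adjMultiset]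
    | cons b rest =>
      show Multiset.card (s(a,b) ::ₘ adjMultiset (b :: rest)) = _
      rw [Multiset.card_cons, ih]
      simp

/-- achievability of `n* − 1` in Theorem 4 of the paper: for CNPs
`c₁, c₂` over a finite alphabet `α` with `n* = Σ_x min(c₁(x), c₂(x)) ≥ 1`, there exist
strings `S₁, S₂` with `cnp(S₁) = c₁`, `cnp(S₂) = c₂`, and at least `n* − 1` common
adjacencies. -/
theorem exists_strings_numAdj_ge_nstar_sub_one
    {α : Type*} [Fintype α] [DecidableEq α] (c₁ c₂ : α → ℕ)
    (hn : 1 ≤ ∑ x : α, min (c₁ x) (c₂ x)) :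
    ∃ S₁ S₂ : List α, cnp S₁ = c₁ ∧ cnp S₂ = c₂ ∧
      (∑ x : α, min (c₁ x) (c₂ x)) - 1 ≤ numAdj S₁ S₂ := by
  set v : α → ℕ := fun x => min (c₁ x) (c₂ x) with hv
  refine ⟨listOf v ++ listOf (fun x => c₁ x - v x),
    listOf v ++ listOf (fun x => c₂ x - v x), ?_, ?_, ?_⟩
  · funext x
    simp [cnp, List.count_append, count_listOf, hv]
  · funext x
    simp [cnp, List.count_append, count_listOf, hv]
  · have h1 := adjMultiset_prefix_le (listOf v) (listOf (fun x => c₁ x - v x))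
    have h2 := adjMultiset_prefix_le (listOf v) (listOf (fun x => c₂ x - v x))
    have hle : adjMultiset (listOf v) ≤
        adjMultiset (listOf v ++ listOf (fun x => c₁ x - v x)) ∩
        adjMultiset (listOf v ++ listOf (fun x => c₂ x - v x)) := le_inf h1 h2
    have := Multiset.card_le_card hle
    rw [card_adjMultiset, length_listOf] at this
    exact this
end

section
/- Let c_1, c_2 : Σ → ℕ be two CNPs over a finite alphabet Σ and let n* = Σ_{x ∈ Σ} min(c_1(x), c_2(x)). Suppose there exist distinct characters x, y ∈ Σ with min(c_1(x), c_2(x)) ≥ 1, min(c_1(y), c_2(y)) ≥ 1, c_1(x) > c_2(x), and c_2(y) > c_1(y). Then there exist strings S_1, S_2 over Σ with cnp(S_1) = c_1, cnp(S_2) = c_2, and a(S_1, S_2) = n*. -/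
section Aux
variable {α : Type*}

lemma adjMultiset_card (a : α) (l : List α) :
    Multiset.card (adjMultiset (a :: l)) = l.length := by
  induction l generalizing a with
  | nil => rfl
  | cons b t ih => simp [adjMultiset, ih b]

lemma adjMultiset_append (A : List α) (u v : α) (B : List α) :
    adjMultiset (A ++ u :: v :: B) =
      adjMultiset (A ++ [u]) + (s(u, v) ::ₘ adjMultiset (v :: B)) := by
  induction A with
  | nil => simp [adjMultiset]
  | cons a A' ih =>
    cases A' with
    | nil => simp [adjMultiset, Multiset.cons_swap]
    | cons a' A'' =>
      have h1 : (a :: a' :: A'') ++ u :: v :: B = a :: ((a' :: A'') ++ u :: v :: B) := rfl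
      have h2 : (a :: a' :: A'') ++ [u] = a :: ((a' :: A'') ++ [u]) := rfl
      rw [h1, h2]
      show s(a, a') ::ₘ adjMultiset ((a' :: A'') ++ u :: v :: B) =
        (s(a, a') ::ₘ adjMultiset ((a' :: A'') ++ [u])) + _
      rw [ih]
      simp [Multiset.cons_add, Multiset.cons_swap]

lemma mem_of_mem_adjMultiset {l : List α} {a b : α}
    (h : s(a, b) ∈ adjMultiset l) : a ∈ l ∧ b ∈ l := by
  induction l with
  | nil => simp [adjMultiset] at h
  | cons c t ih =>
    cases t with
    | nil => simp [adjMultiset] at h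
    | cons d r =>
      rw [adjMultiset, Multiset.mem_cons] at h
      rcases h with h | h
      · rw [Sym2.eq_iff] at h
        rcases h with ⟨rfl, rfl⟩ | ⟨rfl, rfl⟩ <;> simp
      · have := ih h
        exact ⟨List.mem_cons_of_mem _ this.1, List.mem_cons_of_mem _ this.2⟩

lemma count_flatMap_replicate [DecidableEq α] (f : α → ℕ) (l : List α) (hl : l.Nodup) (w : α) :
    (l.flatMap fun z => List.replicate (f z) z).count w = if w ∈ l then f w else 0 := by
  induction l with
  | nil => simp
  | cons c t ih =>
    rw [List.flatMap_cons, List.count_append, List.count_replicate,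
      ih (List.Nodup.of_cons hl)]
    have hc : c ∉ t := (List.nodup_cons.mp hl).1
    by_cases hwc : w = c
    · subst hwc; simp [hc]
    · simp [Ne.symm hwc, hwc, List.mem_cons]

lemma length_flatMap_replicate (f : α → ℕ) (l : List α) :
    (l.flatMap fun z => List.replicate (f z) z).length = (l.map f).sum := by
  simp [List.length_flatMap, Function.comp_def]

end Aux

/-- achievability of `n*` in Theorem 4 of the paper: for CNPs
`c₁, c₂` over a finite alphabet `α`, if there are distinct characters `x, y` with
`min(c₁(x), c₂(x)) ≥ 1`, `min(c₁(y), c₂(y)) ≥ 1`, `c₁(x) > c₂(x)` and `c₂(y) > c₁(y)`,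
then there exist strings `S₁, S₂` with `cnp(S₁) = c₁`, `cnp(S₂) = c₂`, and exactly
`n* = Σ_z min(c₁(z), c₂(z))` common adjacencies. -/
theorem exists_strings_numAdj_eq_nstar
    {α : Type*} [Fintype α] [DecidableEq α] (c₁ c₂ : α → ℕ)
    (x y : α) (hxy : x ≠ y)
    (hx1 : 1 ≤ min (c₁ x) (c₂ x)) (hy1 : 1 ≤ min (c₁ y) (c₂ y))
    (hx : c₂ x < c₁ x) (hy : c₁ y < c₂ y) :
    ∃ S₁ S₂ : List α, cnp S₁ = c₁ ∧ cnp S₂ = c₂ ∧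
      numAdj S₁ S₂ = ∑ z : α, min (c₁ z) (c₂ z) := by
  classical
  set v : α → ℕ := fun z => min (c₁ z) (c₂ z) with hv
  -- middle multiplicities
  set m : α → ℕ := fun z => v z - (if z = x then 1 else 0) - (if z = y then 1 else 0) with hm
  set g₁ : α → ℕ := fun z => if z = x then 0 else c₁ z - v z with hg₁
  set g₂ : α → ℕ := fun z => if z = y then 0 else c₂ z - v z with hg₂
  set mid : List α := (Finset.univ.toList).flatMap fun z => List.replicate (m z) z with hmid
  set F₁ : List α := (Finset.univ.toList).flatMap fun z => List.replicate (g₁ z) z with hF₁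
  set F₂ : List α := (Finset.univ.toList).flatMap fun z => List.replicate (g₂ z) z with hF₂
  set a : ℕ := c₁ x - c₂ x with ha
  set b : ℕ := c₂ y - c₁ y with hb
  set T : List α := y :: (mid ++ [x]) with hT
  set E₁ : List α := F₁ ++ List.replicate a x with hE₁
  set E₂ : List α := List.replicate b y ++ F₂ with hE₂
  refine ⟨E₁ ++ T, T ++ E₂, ?_, ?_, ?_⟩
  · -- counts S₁
    funext w
    have h1 := count_flatMap_replicate g₁ Finset.univ.toList Finset.univ.nodup_toList w
    have h2 := count_flatMap_replicate m Finset.univ.toList Finset.univ.nodup_toList w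
    simp only [Finset.mem_toList, Finset.mem_univ, if_true] at h1 h2
    rw [← hF₁] at h1
    rw [← hmid] at h2
    show (E₁ ++ T).count w = c₁ w
    simp only [hE₁, hT, List.count_append, List.count_cons, List.count_nil,
      List.count_replicate, h1, h2, beq_iff_eq, hg₁, hm, hv]
    by_cases hwx : w = x
    · simp only [hwx, hxy, Ne.symm hxy, if_true, if_false, if_pos rfl,
        if_neg hxy, if_neg (Ne.symm hxy), hg₁, hg₂, hm, hv]
      omega
    · by_cases hwy : w = y
      · simp only [hwy, hxy, Ne.symm hxy, if_true, if_false, if_pos rfl,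
          if_neg hxy, if_neg (Ne.symm hxy), hg₁, hg₂, hm, hv]
        omega
      · simp only [if_neg hwx, if_neg hwy, if_neg (Ne.symm hwx), if_neg (Ne.symm hwy),
          hg₁, hg₂, hm, hv]
        omega
  · -- counts S₂
    funext w
    have h1 := count_flatMap_replicate g₂ Finset.univ.toList Finset.univ.nodup_toList w
    have h2 := count_flatMap_replicate m Finset.univ.toList Finset.univ.nodup_toList w
    simp only [Finset.mem_toList, Finset.mem_univ, if_true] at h1 h2
    rw [← hF₂] at h1
    rw [← hmid] at h2
    show (T ++ E₂).count w = c₂ w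
    simp only [hE₂, hT, List.count_append, List.count_cons, List.count_nil,
      List.count_replicate, h1, h2, beq_iff_eq, hg₂, hm, hv]
    by_cases hwx : w = x
    · simp only [hwx, hxy, Ne.symm hxy, if_true, if_false, if_pos rfl,
        if_neg hxy, if_neg (Ne.symm hxy), hg₁, hg₂, hm, hv]
      omega
    · by_cases hwy : w = y
      · simp only [hwy, hxy, Ne.symm hxy, if_true, if_false, if_pos rfl,
          if_neg hxy, if_neg (Ne.symm hxy), hg₁, hg₂, hm, hv]
        omega
      · simp only [if_neg hwx, if_neg hwy, if_neg (Ne.symm hwx), if_neg (Ne.symm hwy),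
          hg₁, hg₂, hm, hv]
        omega
  · -- adjacencies
    have hane : 1 ≤ a := by omega
    have hbne : 1 ≤ b := by omega
    -- rewrite S₁
    have hS₁ : E₁ ++ T = (F₁ ++ List.replicate (a - 1) x) ++ x :: y :: (mid ++ [x]) := by
      rw [hE₁, hT]
      have : List.replicate a x = List.replicate (a - 1) x ++ [x] := by
        conv_lhs => rw [show a = (a - 1) + 1 by omega]
        exact List.replicate_succ'
      rw [this]
      simp [List.append_assoc]
    have hS₂ : T ++ E₂ = (y :: mid) ++ x :: y :: (List.replicate (b - 1) y ++ F₂) := by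
      rw [hE₂, hT]
      have : List.replicate b y = y :: List.replicate (b - 1) y := by
        conv_lhs => rw [show b = (b - 1) + 1 by omega]
        exact List.replicate_succ
      rw [this]
      simp [List.append_assoc]
    have hA₁ : adjMultiset (E₁ ++ T) = adjMultiset E₁ + (s(x, y) ::ₘ adjMultiset T) := by
      rw [hS₁, adjMultiset_append]
      congr 2
      · rw [hE₁]
        have : List.replicate a x = List.replicate (a - 1) x ++ [x] := by
          conv_lhs => rw [show a = (a - 1) + 1 by omega]
          exact List.replicate_succ'
        rw [this, List.append_assoc]
    have hA₂ : adjMultiset (T ++ E₂) = adjMultiset T + (s(x, y) ::ₘ adjMultiset E₂) := by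
      rw [hS₂, adjMultiset_append]
      congr 2
      · rw [hE₂]
        have : List.replicate b y = y :: List.replicate (b - 1) y := by
          conv_lhs => rw [show b = (b - 1) + 1 by omega]
          exact List.replicate_succ
        rw [this, List.cons_append]
    -- disjointness of adjacency supports
    have hdisj : ∀ p : Sym2 α, p ∉ adjMultiset E₁ ∨ p ∉ adjMultiset E₂ := by
      intro p
      induction p using Sym2.ind with
      | _ u w =>
        by_contra h
        push_neg at h
        obtain ⟨h1, h2⟩ := h
        have hu1 : u ∈ E₁ := (mem_of_mem_adjMultiset h1).1
        have hu2 : u ∈ E₂ := (mem_of_mem_adjMultiset h2).1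
        have hmem1 : ∀ z ∈ E₁, c₂ z < c₁ z := by
          intro z hz
          rw [hE₁, List.mem_append] at hz
          rcases hz with hz | hz
          · rw [hF₁, List.mem_flatMap] at hz
            obtain ⟨w', _, hw'⟩ := hz
            rw [List.mem_replicate] at hw'
            obtain ⟨hne, rfl⟩ := hw'
            simp only [hg₁] at hne
            by_cases hzx : z = x
            · subst hzx; exact hx
            · rw [if_neg hzx] at hne
              simp only [hv] at hne
              omega
          · rw [List.eq_of_mem_replicate hz]; exact hx
        have hmem2 : ∀ z ∈ E₂, c₁ z < c₂ z := by
          intro z hz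
          rw [hE₂, List.mem_append] at hz
          rcases hz with hz | hz
          · rw [List.eq_of_mem_replicate hz]; exact hy
          · rw [hF₂, List.mem_flatMap] at hz
            obtain ⟨w', _, hw'⟩ := hz
            rw [List.mem_replicate] at hw'
            obtain ⟨hne, rfl⟩ := hw'
            simp only [hg₂] at hne
            by_cases hzy : z = y
            · subst hzy; exact hy
            · rw [if_neg hzy] at hne
              simp only [hv] at hne
              omega
        have := hmem1 u hu1
        have := hmem2 u hu2
        omega
    -- compute the intersection
    have hinter : adjMultiset (E₁ ++ T) ∩ adjMultiset (T ++ E₂) = s(x, y) ::ₘ adjMultiset T := by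
      rw [Multiset.ext]
      intro p
      rw [Multiset.count_inter, hA₁, hA₂]
      simp only [Multiset.count_add, Multiset.count_cons]
      have hd := hdisj p
      rw [← Multiset.count_eq_zero, ← Multiset.count_eq_zero] at hd
      rcases hd with hd | hd <;> rw [hd] <;> omega
    rw [numAdj, hinter]
    rw [Multiset.card_cons, hT, adjMultiset_card]
    -- length computation
    have hlen : mid.length = ((Finset.univ.toList).map m).sum := by
      rw [hmid, length_flatMap_replicate]
    have hsum : ∀ f : α → ℕ, ((Finset.univ.toList).map f).sum = ∑ z : α, f z := by
      intro f
      exact Finset.sum_map_toList Finset.univ f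
    have hvm : ∀ z : α, v z = m z + (if z = x then 1 else 0) + (if z = y then 1 else 0) := by
      intro z
      by_cases hzx : z = x
      · simp [hzx, hxy, Ne.symm hxy, hm, hv] <;> omega
      · by_cases hzy : z = y
        · simp [hzy, hzx, hxy, Ne.symm hxy, hm, hv] <;> omega
        · simp [hzx, hzy, hm, hv]
    rw [List.length_append, List.length_singleton, hlen, hsum]
    calc ∑ z : α, m z + 1 + 1 = ∑ z : α, m z + (∑ z : α, if z = x then 1 else 0)
        + (∑ z : α, if z = y then 1 else 0) := by
          rw [Finset.sum_ite_eq' Finset.univ x (fun _ => 1),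
            Finset.sum_ite_eq' Finset.univ y (fun _ => 1)]
          simp
      _ = ∑ z : α, (m z + (if z = x then 1 else 0) + (if z = y then 1 else 0)) := by
          rw [Finset.sum_add_distrib, Finset.sum_add_distrib]
      _ = ∑ z : α, v z := by
          exact Finset.sum_congr rfl fun z _ => (hvm z).symm
end

section
/- Let c_1, c_2 : Σ → ℕ be two CNPs over a finite alphabet Σ and let n* = Σ_{x ∈ Σ} min(c_1(x), c_2(x)), with n* ≥ 1. Then the maximum of a(S_1, S_2) over all strings S_1, S_2 with cnp(S_1) = c_1 and cnp(S_2) = c_2 equals n* if there exist distinct characters x, y ∈ Σ with min(c_1(x), c_2(x)) ≥ 1, min(c_1(y), c_2(y)) ≥ 1, c_1(x) > c_2(x), and c_2(y) > c_1(y); and it equals n* − 1 otherwise. -/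
namespace CNPAux

set_option linter.unusedSectionVars false

variable {α : Type*}

@[simp] lemma adj_nil : adjMultiset ([] : List α) = 0 := rfl
@[simp] lemma adj_single (a : α) : adjMultiset [a] = 0 := rfl
@[simp] lemma adj_cons_cons (a b : α) (t : List α) :
    adjMultiset (a :: b :: t) = s(a, b) ::ₘ adjMultiset (b :: t) := rfl

lemma count_cons' [DecidableEq α] (z a : α) (l : List α) :
    (a :: l).count z = l.count z + if z = a then 1 else 0 := by
  by_cases h : z = a
  · subst h; simp [List.count_cons]
  · simp [List.count_cons, h, Ne.symm h]

lemma count_singleton'' [DecidableEq α] (z a : α) :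
    ([a] : List α).count z = if z = a then 1 else 0 := by
  rw [count_cons']; simp

lemma adj_le_append (L R : List α) : adjMultiset L ≤ adjMultiset (L ++ R) := by
  induction L with
  | nil => simp
  | cons a t ih =>
    cases t with
    | nil => simp
    | cons b t' =>
      simpa using Multiset.cons_le_cons s(a, b) ih

lemma card_adj (S : List α) : Multiset.card (adjMultiset S) = S.length - 1 := by
  induction S with
  | nil => simp
  | cons a t ih =>
    cases t with
    | nil => simp
    | cons b t' => simp [ih]

lemma adj_append_pair (L : List α) (y x : α) :
    adjMultiset ((L ++ [y]) ++ [x]) = adjMultiset (L ++ [y]) + {s(y, x)} := by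
  induction L with
  | nil => simp
  | cons b t ih =>
    cases t with
    | nil => simp [Multiset.cons_add]
    | cons c t' =>
      have h1 : ((b :: c :: t') ++ [y]) ++ [x] = b :: c :: ((t' ++ [y]) ++ [x]) := by simp
      rw [h1]
      have h2 : (b :: c :: t') ++ [y] = b :: c :: (t' ++ [y]) := by simp
      rw [h2]
      have := ih
      simp only [List.cons_append] at this ⊢
      rw [adj_cons_cons, adj_cons_cons, this, Multiset.cons_add]

lemma mem_of_mem_adj {p : Sym2 α} {S : List α} (hp : p ∈ adjMultiset S) :
    ∀ z ∈ p, z ∈ S := by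
  induction S with
  | nil => simp at hp
  | cons a t ih =>
    cases t with
    | nil => simp at hp
    | cons b t' =>
      rw [adj_cons_cons, Multiset.mem_cons] at hp
      rcases hp with rfl | hp
      · intro z hz
        rcases Sym2.mem_iff.mp hz with rfl | rfl <;> simp
      · intro z hz
        have := ih hp z hz
        simp at this ⊢
        tauto

noncomputable def occ [DecidableEq α] (z : α) : Sym2 α → ℕ :=
  Sym2.lift ⟨fun a b => (if z = a then 1 else 0) + (if z = b then 1 else 0), by
    intro a b; ring⟩

@[simp] lemma occ_mk [DecidableEq α] (z a b : α) :
    occ z s(a, b) = (if z = a then 1 else 0) + (if z = b then 1 else 0) := by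
  simp [occ]

lemma sum_occ [Fintype α] [DecidableEq α] (p : Sym2 α) : ∑ z : α, occ z p = 2 := by
  induction p using Sym2.ind with
  | _ a b =>
    simp [Finset.sum_add_distrib, Finset.sum_ite_eq', Finset.sum_ite_eq]

noncomputable def degM [DecidableEq α] (z : α) (M : Multiset (Sym2 α)) : ℕ :=
  (M.map (occ z)).sum

lemma degM_mono [DecidableEq α] (z : α) {M N : Multiset (Sym2 α)} (h : M ≤ N) :
    degM z M ≤ degM z N := by
  obtain ⟨u, rfl⟩ := Multiset.le_iff_exists_add.mp h
  simp [degM]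

lemma sum_degM [Fintype α] [DecidableEq α] (M : Multiset (Sym2 α)) :
    ∑ z : α, degM z M = 2 * Multiset.card M := by
  induction M using Multiset.induction with
  | empty => simp [degM]
  | cons p M ih =>
    simp [degM, Finset.sum_add_distrib] at ih ⊢
    rw [ih, sum_occ]
    ring

lemma degM_adj_cons [DecidableEq α] (z : α) :
    ∀ (S' : List α) (a : α), degM z (adjMultiset (a :: S')) ≤
      (if z = a then 1 else 0) + 2 * S'.count z := by
  intro S'
  induction S' with
  | nil => intro a; simp [degM, adjMultiset]
  | cons b t ih =>
    intro a
    rw [adj_cons_cons]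
    have h1 : degM z (s(a, b) ::ₘ adjMultiset (b :: t)) =
        occ z s(a, b) + degM z (adjMultiset (b :: t)) := by
      simp [degM]
    rw [h1]
    have h2 := ih b
    simp only [occ_mk]
    rw [count_cons']
    split_ifs at * <;> omega

lemma degM_adj_le [DecidableEq α] (z : α) (S : List α) :
    degM z (adjMultiset S) ≤ 2 * S.count z := by
  cases S with
  | nil => simp [degM, adjMultiset]
  | cons a t =>
    have := degM_adj_cons z t a
    rw [count_cons']
    split_ifs at * <;> omega

lemma countP_eq_sum [Fintype α] [DecidableEq α] (Q : α → Bool) (S : List α) :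
    S.countP Q = ∑ z : α, if Q z then S.count z else 0 := by
  induction S with
  | nil => simp
  | cons a t ih =>
    rw [List.countP_cons, ih]
    have h : ∀ z : α, (if Q z then (a :: t).count z else 0) =
        (if Q z then t.count z else 0) + (if z = a then (if Q z then 1 else 0) else 0) := by
      intro z
      rw [count_cons']
      split_ifs <;> simp_all
    rw [Finset.sum_congr rfl (fun z _ => h z), Finset.sum_add_distrib,
      Finset.sum_ite_eq']
    simp

lemma length_eq_sum_count [Fintype α] [DecidableEq α] (S : List α) :
    S.length = ∑ z : α, S.count z := by
  have := countP_eq_sum (fun _ => true) S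
  simpa using this

lemma card_le_countP [DecidableEq α] (Q : α → Bool) :
    ∀ (S : List α) (M : Multiset (Sym2 α)),
      M ≤ adjMultiset S → (∀ p ∈ M, ∀ z ∈ p, Q z) →
      Multiset.card M ≤ S.countP Q ∧
        (1 ≤ S.countP Q → Multiset.card M + 1 ≤ S.countP Q) := by
  intro S
  induction S with
  | nil =>
    intro M hM _
    simp [adjMultiset, Multiset.le_zero] at hM
    subst hM
    simp
  | cons a t ih =>
    cases t with
    | nil =>
      intro M hM _
      simp [adjMultiset, Multiset.le_zero] at hM
      subst hM
      simp
    | cons b t' =>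
      intro M hM hQ
      rw [adj_cons_cons] at hM
      by_cases hmem : s(a, b) ∈ M
      · have hQa : Q a := hQ _ hmem a (by simp)
        have hQb : Q b := hQ _ hmem b (by simp)
        have hM' : M.erase s(a, b) ≤ adjMultiset (b :: t') := by
          have := Multiset.erase_le_erase s(a, b) hM
          simpa using this
        have hQ' : ∀ p ∈ M.erase s(a, b), ∀ z ∈ p, Q z := by
          intro p hp
          exact hQ p (Multiset.mem_of_mem_erase hp)
        obtain ⟨_, h2⟩ := ih (M.erase s(a, b)) hM' hQ'
        have hcard : Multiset.card M = Multiset.card (M.erase s(a, b)) + 1 := by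
          rw [← Multiset.cons_erase hmem]; simp
        have hb1 : 1 ≤ (b :: t').countP Q := by
          rw [List.countP_cons, if_pos hQb]
          omega
        have h4 := h2 hb1
        have h5 : (a :: b :: t').countP Q = (b :: t').countP Q + 1 := by
          rw [List.countP_cons (l := b :: t'), if_pos hQa]
        constructor
        · omega
        · intro _
          omega
      · have hM' : M ≤ adjMultiset (b :: t') := by
          rw [Multiset.le_iff_count]
          intro q
          have := Multiset.le_iff_count.mp hM q
          rw [Multiset.count_cons] at this
          by_cases hq : q = s(a, b)
          · subst hq
            simp [Multiset.count_eq_zero_of_notMem hmem]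
          · simpa [hq] using this
        obtain ⟨h1, h2⟩ := ih M hM' hQ
        constructor
        · calc Multiset.card M ≤ (b :: t').countP Q := h1
            _ ≤ (a :: b :: t').countP Q := by rw [List.countP_cons (l := b :: t')]; omega
        · intro hge
          by_cases hQa : Q a
          · rw [List.countP_cons (l := b :: t'), if_pos hQa]
            omega
          · rw [List.countP_cons (l := b :: t'), if_neg hQa] at hge ⊢
            simpa using h2 (by simpa using hge)

variable [Fintype α] [DecidableEq α]

noncomputable def buildL (c : α → ℕ) : List α :=
  Finset.univ.toList.flatMap fun z => List.replicate (c z) z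

lemma count_flatMap_replicate (c : α → ℕ) (z : α) :
    ∀ (l : List α), l.Nodup →
      (l.flatMap fun w => List.replicate (c w) w).count z = if z ∈ l then c z else 0 := by
  intro l
  induction l with
  | nil => simp
  | cons a t ih =>
    intro hnd
    rw [List.nodup_cons] at hnd
    rw [List.flatMap_cons, List.count_append, ih hnd.2]
    by_cases h : z = a
    · subst h
      simp [List.count_replicate, hnd.1]
    · simp [List.count_replicate, h, Ne.symm h]

lemma count_buildL (c : α → ℕ) (z : α) : (buildL c).count z = c z := by
  rw [buildL, count_flatMap_replicate c z _ Finset.univ.nodup_toList]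
  simp

lemma length_buildL (c : α → ℕ) : (buildL c).length = ∑ z : α, c z := by
  rw [length_eq_sum_count]
  exact Finset.sum_congr rfl fun z _ => count_buildL c z

/-- General upper bound: the number of common adjacencies is at most `n*`. -/
lemma ub_general (c₁ c₂ : α → ℕ) (S₁ S₂ : List α) (h₁ : cnp S₁ = c₁) (h₂ : cnp S₂ = c₂) :
    numAdj S₁ S₂ ≤ ∑ z : α, min (c₁ z) (c₂ z) := by
  set M := adjMultiset S₁ ∩ adjMultiset S₂ with hM
  have key : ∀ z : α, degM z M ≤ 2 * min (c₁ z) (c₂ z) := by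
    intro z
    have a1 : degM z M ≤ 2 * S₁.count z :=
      le_trans (degM_mono z Multiset.inter_le_left) (degM_adj_le z S₁)
    have a2 : degM z M ≤ 2 * S₂.count z :=
      le_trans (degM_mono z Multiset.inter_le_right) (degM_adj_le z S₂)
    have e1 : S₁.count z = c₁ z := by rw [← h₁]; rfl
    have e2 : S₂.count z = c₂ z := by rw [← h₂]; rfl
    rw [e1] at a1; rw [e2] at a2
    omega
  have hsum : ∑ z : α, degM z M ≤ ∑ z : α, 2 * min (c₁ z) (c₂ z) :=
    Finset.sum_le_sum fun z _ => key z
  rw [sum_degM, ← Finset.mul_sum] at hsum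
  have : numAdj S₁ S₂ = Multiset.card M := rfl
  omega

/-- Degenerate upper bound: if `c₂ ≤ c₁` on the common support, the number of
common adjacencies is at most `n* - 1`. -/
lemma ub_degenerate (c₁ c₂ : α → ℕ) (hd : ∀ z, 1 ≤ c₁ z → 1 ≤ c₂ z → c₂ z ≤ c₁ z)
    (hn : 1 ≤ ∑ z : α, min (c₁ z) (c₂ z)) (S₁ S₂ : List α)
    (h₁ : cnp S₁ = c₁) (h₂ : cnp S₂ = c₂) :
    numAdj S₁ S₂ + 1 ≤ ∑ z : α, min (c₁ z) (c₂ z) := by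
  set M := adjMultiset S₁ ∩ adjMultiset S₂ with hMdef
  set Q : α → Bool := fun z => decide (1 ≤ c₁ z) with hQdef
  have hcount : (S₂ : List α).countP Q = ∑ z : α, min (c₁ z) (c₂ z) := by
    rw [countP_eq_sum]
    refine Finset.sum_congr rfl fun z _ => ?_
    have e2 : S₂.count z = c₂ z := by rw [← h₂]; rfl
    by_cases h : 1 ≤ c₁ z
    · have hq : Q z = true := by simp only [hQdef, decide_eq_true_iff]; omega
      rw [if_pos hq, e2]
      have := hd z h
      omega
    · have hq : ¬ (Q z = true) := by simp only [hQdef, decide_eq_true_iff]; omega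
      rw [if_neg hq]
      omega
  have hMle : M ≤ adjMultiset S₂ := Multiset.inter_le_right
  have hprop : ∀ p ∈ M, ∀ z ∈ p, Q z := by
    intro p hp z hz
    have hp1 : p ∈ adjMultiset S₁ := (Multiset.mem_inter.mp hp).1
    have hzS : z ∈ S₁ := mem_of_mem_adj hp1 z hz
    have : 0 < S₁.count z := List.count_pos_iff.mpr hzS
    have e1 : S₁.count z = c₁ z := by rw [← h₁]; rfl
    simp only [hQdef, decide_eq_true_iff]
    omega
  obtain ⟨_, hstrong⟩ := card_le_countP Q S₂ M hMle hprop
  have := hstrong (by omega)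
  have hcardeq : numAdj S₁ S₂ = Multiset.card M := rfl
  omega

end CNPAux

set_option maxHeartbeats 1000000 in
open CNPAux in
/-- Theorem 4 of the paper, optimality of Algorithm 1: for CNPs
`c₁, c₂` over a finite alphabet `α` with `n* = Σ_z min(c₁(z), c₂(z)) ≥ 1`, the maximum
number of common adjacencies `a(S₁, S₂)` over all strings `S₁, S₂` with `cnp(S₁) = c₁`
and `cnp(S₂) = c₂` equals `n*` if there are distinct characters `x, y` with
`min(c₁(x), c₂(x)) ≥ 1`, `min(c₁(y), c₂(y)) ≥ 1`, `c₁(x) > c₂(x)` and `c₂(y) > c₁(y)`,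
and equals `n* − 1` otherwise. -/
theorem isGreatest_numAdj
    {α : Type*} [Fintype α] [DecidableEq α] (c₁ c₂ : α → ℕ)
    (hn : 1 ≤ ∑ z : α, min (c₁ z) (c₂ z)) :
    ((∃ x y : α, x ≠ y ∧ 1 ≤ min (c₁ x) (c₂ x) ∧ 1 ≤ min (c₁ y) (c₂ y) ∧
        c₂ x < c₁ x ∧ c₁ y < c₂ y) →
      IsGreatest {m : ℕ | ∃ S₁ S₂ : List α, cnp S₁ = c₁ ∧ cnp S₂ = c₂ ∧ numAdj S₁ S₂ = m}
        (∑ z : α, min (c₁ z) (c₂ z))) ∧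
    (¬ (∃ x y : α, x ≠ y ∧ 1 ≤ min (c₁ x) (c₂ x) ∧ 1 ≤ min (c₁ y) (c₂ y) ∧
        c₂ x < c₁ x ∧ c₁ y < c₂ y) →
      IsGreatest {m : ℕ | ∃ S₁ S₂ : List α, cnp S₁ = c₁ ∧ cnp S₂ = c₂ ∧ numAdj S₁ S₂ = m}
        ((∑ z : α, min (c₁ z) (c₂ z)) - 1)) := by
  set n := ∑ z : α, min (c₁ z) (c₂ z) with hndef
  set m : α → ℕ := fun z => min (c₁ z) (c₂ z) with hmdef
  constructor
  · -- non-degenerate case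
    rintro ⟨x, y, hxy, hx, hy, hx2, hy2⟩
    have hmx : m x = c₂ x := by simp [hmdef]; omega
    have hmy : m y = c₁ y := by simp [hmdef]; omega
    -- the construction
    set m' : α → ℕ :=
      fun z => m z - (if z = x then 1 else 0) - (if z = y then 1 else 0) with hm'def
    set T : List α := (x :: buildL m') ++ [y] with hTdef
    set S₁ : List α :=
      (T ++ [x]) ++ buildL (fun z => c₁ z - m z - (if z = x then 1 else 0)) with hS₁def
    set S₂ : List α :=
      (y :: T) ++ buildL (fun z => c₂ z - m z - (if z = y then 1 else 0)) with hS₂def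
    have hcT : ∀ z, T.count z = m z := by
      intro z
      rw [hTdef, List.count_append, count_cons', count_buildL, count_singleton'']
      have hzm : m' z = m z - (if z = x then 1 else 0) - (if z = y then 1 else 0) := rfl
      rw [hzm]
      have h1 : 1 ≤ m x := hx
      have h2 : 1 ≤ m y := hy
      split_ifs with e1 e2 <;> simp_all
    have hcS₁ : cnp S₁ = c₁ := by
      funext z
      show S₁.count z = c₁ z
      rw [hS₁def, List.count_append, List.count_append, count_buildL, count_singleton'', hcT]
      have hmle : m z ≤ c₁ z := min_le_left _ _
      by_cases e : z = x
      · subst e; simp [hmx]; omega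
      · simp [e]; omega
    have hcS₂ : cnp S₂ = c₂ := by
      funext z
      show S₂.count z = c₂ z
      rw [hS₂def, List.count_append, count_cons', hcT, count_buildL]
      have hmle : m z ≤ c₂ z := min_le_right _ _
      by_cases e : z = y
      · subst e; simp [hmy]; omega
      · simp [e]; omega
    -- the common adjacency multiset
    set N : Multiset (Sym2 α) := s(y, x) ::ₘ adjMultiset T with hNdef
    have hN1 : N ≤ adjMultiset S₁ := by
      have e1 : adjMultiset (T ++ [x]) = adjMultiset T + {s(y, x)} := by
        rw [hTdef]
        exact adj_append_pair (x :: buildL m') y x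
      have e2 : N = adjMultiset T + {s(y, x)} := by
        rw [hNdef, add_comm, Multiset.singleton_add]
      calc N = adjMultiset (T ++ [x]) := by rw [e2, e1]
        _ ≤ adjMultiset S₁ := by rw [hS₁def]; exact adj_le_append _ _
    have hN2 : N ≤ adjMultiset S₂ := by
      have e1 : adjMultiset (y :: T) = N := by
        rw [hTdef, hNdef]
        rw [List.cons_append]
        rfl
      calc N = adjMultiset (y :: T) := e1.symm
        _ ≤ adjMultiset S₂ := by rw [hS₂def]; exact adj_le_append _ _
    have hTlen : T.length = n := by
      rw [hTdef]
      simp only [List.length_append, List.length_cons, List.length_singleton, List.length_nil, length_buildL]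
      have : ∑ z : α, m z = (∑ z : α, m' z) + 2 := by
        have hpt : ∀ z : α, m z = m' z + ((if z = x then 1 else 0) + (if z = y then 1 else 0)) := by
          intro z
          have hzm : m' z = m z - (if z = x then 1 else 0) - (if z = y then 1 else 0) := rfl
          rw [hzm]
          have h1 : 1 ≤ m x := hx
          have h2 : 1 ≤ m y := hy
          split_ifs with e1 e2 <;> simp_all
        rw [Finset.sum_congr rfl fun z _ => hpt z, Finset.sum_add_distrib,
          Finset.sum_add_distrib, Finset.sum_ite_eq', Finset.sum_ite_eq']
        simp
      have hnm : n = ∑ z : α, m z := rfl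
      omega
    have hcardN : Multiset.card N = n := by
      have hc : Multiset.card N = Multiset.card (adjMultiset T) + 1 := by
        rw [hNdef]; simp
      rw [card_adj] at hc
      omega
    have hlb : n ≤ numAdj S₁ S₂ := by
      have : N ≤ adjMultiset S₁ ∩ adjMultiset S₂ := le_inf hN1 hN2
      have := Multiset.card_le_card this
      rw [hcardN] at this
      exact this
    have hub := ub_general c₁ c₂ S₁ S₂ hcS₁ hcS₂
    constructor
    · exact ⟨S₁, S₂, hcS₁, hcS₂, le_antisymm hub hlb⟩
    · rintro k ⟨U₁, U₂, hU₁, hU₂, rfl⟩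
      exact ub_general c₁ c₂ U₁ U₂ hU₁ hU₂
  · -- degenerate case
    intro hnot
    have hdisj : (∀ z, 1 ≤ c₁ z → 1 ≤ c₂ z → c₂ z ≤ c₁ z) ∨
        (∀ z, 1 ≤ c₁ z → 1 ≤ c₂ z → c₁ z ≤ c₂ z) := by
      by_contra hcon
      push_neg at hcon
      obtain ⟨⟨y, hy1, hy2, hy3⟩, ⟨x, hx1, hx2, hx3⟩⟩ := hcon
      exact hnot ⟨x, y, by rintro rfl; omega, by omega, by omega, by omega, by omega⟩
    have hub : ∀ (U₁ U₂ : List α), cnp U₁ = c₁ → cnp U₂ = c₂ →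
        numAdj U₁ U₂ + 1 ≤ n := by
      intro U₁ U₂ hU₁ hU₂
      rcases hdisj with hd | hd
      · exact ub_degenerate c₁ c₂ hd hn U₁ U₂ hU₁ hU₂
      · have hswap : numAdj U₁ U₂ = numAdj U₂ U₁ := by
          unfold numAdj
          rw [Multiset.inter_comm]
        have hsum : (∑ z : α, min (c₂ z) (c₁ z)) = n := by
          rw [hndef]
          exact Finset.sum_congr rfl fun z _ => min_comm _ _
        have := ub_degenerate c₂ c₁ (fun z h2 h1 => hd z h1 h2) (by omega) U₂ U₁ hU₂ hU₁
        omega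
    -- the construction
    set S₁ : List α := buildL m ++ buildL (fun z => c₁ z - m z) with hS₁def
    set S₂ : List α := buildL m ++ buildL (fun z => c₂ z - m z) with hS₂def
    have hcS₁ : cnp S₁ = c₁ := by
      funext z
      show S₁.count z = c₁ z
      rw [hS₁def, List.count_append, count_buildL, count_buildL]
      have : m z ≤ c₁ z := min_le_left _ _
      omega
    have hcS₂ : cnp S₂ = c₂ := by
      funext z
      show S₂.count z = c₂ z
      rw [hS₂def, List.count_append, count_buildL, count_buildL]
      have : m z ≤ c₂ z := min_le_right _ _
      omega
    have hlb : n - 1 ≤ numAdj S₁ S₂ := by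
      have h1 : adjMultiset (buildL m) ≤ adjMultiset S₁ ∩ adjMultiset S₂ :=
        le_inf (adj_le_append _ _) (adj_le_append _ _)
      have h2 := Multiset.card_le_card h1
      rw [card_adj, length_buildL] at h2
      have hnm : n = ∑ z : α, m z := rfl
      unfold numAdj
      omega
    have hubS := hub S₁ S₂ hcS₁ hcS₂
    constructor
    · exact ⟨S₁, S₂, hcS₁, hcS₂, by omega⟩
    · rintro k ⟨U₁, U₂, hU₁, hU₂, rfl⟩
      have := hub U₁ U₂ hU₁ hU₂
      omega
end
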